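/- Let I be a linearly ordered type and C a commutative ring containing ℚ. Let V1, V2, V3 be nonempty words over I with V1 <dlex V3, and consider the polynomial r(V1,V2,V3) ∈ MvPolynomial C P. Let pmax be the ≼-maximum of the multiset (sh(V1,V2)).map(U ↦ χ(U,V3)). Then there exist a positive natural number k and a polynomial q ∈ MvPolynomial C P such that r(V1,V2,V3) = (k : C) • X(pmax) + q and every variable occurring in q (every element of q.vars) is strictly smaller than pmax with respect to ≼. In particular, pmax is the ≼-greatest variable appearing in r(V1,V2,V3); it occurs only linearly, with a nonzero integer coefficient, and is not multiplied by any other variable. -/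

import Mathlib

open scoped Classical

/-- Degree-lexicographic strict order on words over a linearly ordered alphabet:
first compare lengths, then compare lexicographically. -/
def DlexLt {I : Type*} [LinearOrder I] (V W : List I) : Prop :=
  V.length < W.length ∨ (V.length = W.length ∧ V < W)

/-- Degree-lexicographic (non-strict) order on words. -/
def DlexLe {I : Type*} [LinearOrder I] (V W : List I) : Prop :=
  DlexLt V W ∨ V = W

theorem dlexLe_total {I : Type*} [LinearOrder I] (V W : List I) :
    DlexLe V W ∨ DlexLe W V := by
  rcases lt_trichotomy V.length W.length with h | h | h
  · exact Or.inl (Or.inl (Or.inl h))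
  · rcases lt_trichotomy V W with h' | h' | h'
    · exact Or.inl (Or.inl (Or.inr ⟨h, h'⟩))
    · exact Or.inl (Or.inr h')
    · exact Or.inr (Or.inl (Or.inr ⟨h.symm, h'⟩))
  · exact Or.inr (Or.inl (Or.inl h))

/-- The type `P` of pairs `(V, W)` of nonempty words with `V ≤dlex W`. -/
abbrev WordPair (I : Type*) [LinearOrder I] : Type _ :=
  {p : List I × List I // p.1 ≠ [] ∧ p.2 ≠ [] ∧ DlexLe p.1 p.2}

/-- `χ(A, B)`: the pair `(A, B)` normalized so that the first component is
`≤dlex` the second one. -/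
noncomputable def chi {I : Type*} [LinearOrder I] (A B : List I)
    (hA : A ≠ []) (hB : B ≠ []) : WordPair I :=
  if h : DlexLe A B then ⟨(A, B), hA, hB, h⟩
  else ⟨(B, A), hB, hA, (dlexLe_total A B).resolve_left h⟩

/-- The strict order `≺` on `WordPair I`, comparing `(V, W)` by the triple
`(V.length + W.length, V, W)` lexicographically (words compared by `dlex`). -/
def PairLt {I : Type*} [LinearOrder I] (p q : WordPair I) : Prop :=
  p.val.1.length + p.val.2.length < q.val.1.length + q.val.2.length ∨
  (p.val.1.length + p.val.2.length = q.val.1.length + q.val.2.length ∧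
    (DlexLt p.val.1 q.val.1 ∨ (p.val.1 = q.val.1 ∧ DlexLt p.val.2 q.val.2)))

/-- The order `≼` on `WordPair I`. -/
def PairLe {I : Type*} [LinearOrder I] (p q : WordPair I) : Prop :=
  PairLt p q ∨ p = q

/-- The multiset of shuffles of two words. -/
def shuffles {I : Type*} : List I → List I → Multiset (List I)
  | [], w => {w}
  | x :: v, [] => {x :: v}
  | x :: v, y :: w =>
      ((shuffles v (y :: w)).map (x :: ·)) + ((shuffles (x :: v) w).map (y :: ·))
  termination_by v w => v.length + w.length

/-- The variable `X (χ(A, B))` of the polynomial ring `MvPolynomial (WordPair I) C`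
(`0` in the degenerate case of an empty word, which never occurs below). -/
noncomputable def Xchi {I : Type*} [LinearOrder I] (C : Type*) [CommRing C]
    (A B : List I) : MvPolynomial (WordPair I) C :=
  if h : A ≠ [] ∧ B ≠ [] then MvPolynomial.X (chi A B h.1 h.2) else 0

/-- `Σ_{U ∈ sh(A,B)} X(χ(U, W))`, with multiplicity. -/
noncomputable def shSumR {I : Type*} [LinearOrder I] (C : Type*) [CommRing C]
    (A B W : List I) : MvPolynomial (WordPair I) C :=
  ((shuffles A B).map fun U => Xchi C U W).sum

/-- `Σ_{U ∈ sh(A,B)} X(χ(V, U))`, with multiplicity. -/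
noncomputable def shSumL {I : Type*} [LinearOrder I] (C : Type*) [CommRing C]
    (V A B : List I) : MvPolynomial (WordPair I) C :=
  ((shuffles A B).map fun U => Xchi C V U).sum

/-- The defining relation `r(V1, V2, V3)` of the ring of constants `C₂` of the free
integro-differential ring, as a polynomial in `MvPolynomial (WordPair I) C`. -/
noncomputable def rPoly {I : Type*} [LinearOrder I] (C : Type*) [CommRing C]
    (V1 V2 V3 : List I) : MvPolynomial (WordPair I) C :=
  shSumR C V1 V2 V3 - shSumL C V1 V2 V3
  + ∑ j ∈ Finset.range V2.length,
      ((∑ i ∈ Finset.Ico (1 - j) V1.length,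
          Xchi C (V1.drop i) (V2.drop j) * shSumR C (V1.take i) (V2.take j) V3)
        - ∑ k ∈ Finset.Ico (1 - j) V3.length,
          shSumL C V1 (V2.take j) (V3.take k) * Xchi C (V2.drop j) (V3.drop k))

/-- A word is a Lyndon word iff it is nonempty and lexicographically smaller than each of
its proper nonempty suffixes. -/
def IsLyndonWord {I : Type*} [LinearOrder I] (V : List I) : Prop :=
  V ≠ [] ∧ ∀ A U : List I, A ≠ [] → U ≠ [] → V = A ++ U → V < U

theorem length_of_mem_shuffles {I : Type*} (A B : List I) :
    ∀ U ∈ shuffles A B, U.length = A.length + B.length := by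
  induction A, B using shuffles.induct with
  | case1 w => simp [shuffles]
  | case2 x v => simp [shuffles]
  | case3 x v y w ih1 ih2 =>
    intro U hU
    simp only [shuffles, Multiset.mem_add, Multiset.mem_map] at hU
    rcases hU with ⟨U', hU', rfl⟩ | ⟨U', hU', rfl⟩
    · have := ih1 U' hU'; simp at this ⊢; omega
    · have := ih2 U' hU'; simp at this ⊢; omega

theorem chi_len {I : Type*} [LinearOrder I] (A B : List I) (hA : A ≠ []) (hB : B ≠ []) :
    (chi A B hA hB).val.1.length + (chi A B hA hB).val.2.length = A.length + B.length := by
  unfold chi; split <;> simp [Nat.add_comm]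

theorem chi_fst_cases {I : Type*} [LinearOrder I] (A B : List I) (hA : A ≠ []) (hB : B ≠ []) :
    (chi A B hA hB).val.1 = A ∨ (chi A B hA hB).val.1 = B := by
  unfold chi; split
  · exact Or.inl rfl
  · exact Or.inr rfl

theorem chi_eq_of_le {I : Type*} [LinearOrder I] (A B : List I) (hA : A ≠ []) (hB : B ≠ [])
    (h : DlexLe A B) : chi A B hA hB = ⟨(A, B), hA, hB, h⟩ := by
  unfold chi; exact dif_pos h

/-- All variables of `f` are `≺ pmax`. -/
def Good {I : Type*} [LinearOrder I] {C : Type*} [CommRing C] (pmax : WordPair I)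
    (f : MvPolynomial (WordPair I) C) : Prop :=
  ∀ p ∈ f.vars, PairLt p pmax

section GoodLemmas
variable {I : Type*} [LinearOrder I] {C : Type*} [CommRing C] {pmax : WordPair I}

theorem good_zero : Good pmax (0 : MvPolynomial (WordPair I) C) := by
  intro p hp; simp [MvPolynomial.vars_0] at hp

theorem good_add {f g : MvPolynomial (WordPair I) C} (hf : Good pmax f) (hg : Good pmax g) :
    Good pmax (f + g) := by
  intro p hp
  rcases Finset.mem_union.mp (MvPolynomial.vars_add_subset f g hp) with h | h
  · exact hf p h
  · exact hg p h

theorem good_sub {f g : MvPolynomial (WordPair I) C} (hf : Good pmax f) (hg : Good pmax g) :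
    Good pmax (f - g) := by
  intro p hp
  rcases Finset.mem_union.mp ((MvPolynomial.vars_sub_subset (p := f) (q := g)) hp) with h | h
  · exact hf p h
  · exact hg p h

theorem good_mul {f g : MvPolynomial (WordPair I) C} (hf : Good pmax f) (hg : Good pmax g) :
    Good pmax (f * g) := by
  intro p hp
  rcases Finset.mem_union.mp (MvPolynomial.vars_mul f g hp) with h | h
  · exact hf p h
  · exact hg p h

theorem good_multiset_sum {s : Multiset (MvPolynomial (WordPair I) C)}
    (h : ∀ f ∈ s, Good pmax f) : Good pmax s.sum := by
  induction s using Multiset.induction_on with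
  | empty => simpa using good_zero
  | cons a s ih =>
    rw [Multiset.sum_cons]
    exact good_add (h a (Multiset.mem_cons_self a s))
      (ih fun f hf => h f (Multiset.mem_cons_of_mem hf))

theorem good_finset_sum {α : Type*} {s : Finset α} {f : α → MvPolynomial (WordPair I) C}
    (h : ∀ a ∈ s, Good pmax (f a)) : Good pmax (∑ a ∈ s, f a) := by
  classical
  induction s using Finset.induction_on with
  | empty => simpa using good_zero
  | insert _ _ hnm ih =>
    rw [Finset.sum_insert hnm]
    exact good_add (h _ (Finset.mem_insert_self _ _))
      (ih fun a ha => h a (Finset.mem_insert_of_mem ha))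

theorem good_X [Nontrivial C] {p : WordPair I} (h : PairLt p pmax) :
    Good pmax (MvPolynomial.X p : MvPolynomial (WordPair I) C) := by
  intro q hq
  rw [MvPolynomial.vars_X, Finset.mem_singleton] at hq
  rwa [hq]

theorem good_Xchi_small [Nontrivial C] (A B : List I)
    (h : A.length + B.length < pmax.val.1.length + pmax.val.2.length) :
    Good pmax (Xchi C A B) := by
  unfold Xchi
  split
  · rename_i hh
    exact good_X (Or.inl (by rw [chi_len]; exact h))
  · exact good_zero

theorem good_shSumR_small [Nontrivial C] (A B W : List I)
    (h : A.length + B.length + W.length < pmax.val.1.length + pmax.val.2.length) :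
    Good pmax (shSumR C A B W) := by
  apply good_multiset_sum
  intro f hf
  rcases Multiset.mem_map.mp hf with ⟨U, hU, rfl⟩
  exact good_Xchi_small U W (by rw [length_of_mem_shuffles A B U hU]; exact h)

theorem good_shSumL_small [Nontrivial C] (V A B : List I)
    (h : V.length + (A.length + B.length) < pmax.val.1.length + pmax.val.2.length) :
    Good pmax (shSumL C V A B) := by
  apply good_multiset_sum
  intro f hf
  rcases Multiset.mem_map.mp hf with ⟨U, hU, rfl⟩
  exact good_Xchi_small V U (by rw [length_of_mem_shuffles A B U hU]; exact h)

end GoodLemmas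

/-- For nonempty words `V1 <dlex V3` and any `V2`, the `≼`-maximum
`pmax` of the multiset `(sh(V1,V2)).map (U ↦ χ(U,V3))` is the `≼`-greatest variable
appearing in `r(V1,V2,V3)`: it occurs linearly, with a positive integer coefficient,
and is not multiplied by any other variable. -/
theorem stmt_10 {I : Type*} [LinearOrder I] (C : Type*) [CommRing C] [Algebra ℚ C]
    [Nontrivial C]
    (V1 V2 V3 : List I) (h1 : V1 ≠ []) (h2 : V2 ≠ []) (h3 : V3 ≠ [])
    (h13 : DlexLt V1 V3)
    (pmax : WordPair I)
    (hmem : ∃ (U : List I) (hU : U ≠ []), U ∈ shuffles V1 V2 ∧ pmax = chi U V3 hU h3)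
    (hmax : ∀ U ∈ shuffles V1 V2, ∀ hU : U ≠ [], PairLe (chi U V3 hU h3) pmax) :
    ∃ k : ℕ, 0 < k ∧ ∃ q : MvPolynomial (WordPair I) C,
      rPoly C V1 V2 V3 = (k : C) • MvPolynomial.X pmax + q ∧
      ∀ p ∈ q.vars, PairLt p pmax := by
  obtain ⟨U0, hU0ne, hU0mem, hpmaxeq⟩ := hmem
  have hn : 0 < V1.length := List.length_pos_iff.mpr h1
  have hm : 0 < V2.length := List.length_pos_iff.mpr h2
  have hl : 0 < V3.length := List.length_pos_iff.mpr h3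
  have hU0len : U0.length = V1.length + V2.length := length_of_mem_shuffles _ _ _ hU0mem
  have hplen : pmax.val.1.length + pmax.val.2.length
      = V1.length + V2.length + V3.length := by
    rw [hpmaxeq, chi_len, hU0len]
  have hnl : V1.length ≤ V3.length := by
    rcases h13 with h | ⟨h, _⟩ <;> omega
  have hfst : DlexLt V1 pmax.val.1 := by
    rcases chi_fst_cases U0 V3 hU0ne h3 with h | h
    · rw [hpmaxeq, h]; exact Or.inl (by omega)
    · rw [hpmaxeq, h]; exact h13
  have hne : ∀ U ∈ shuffles V1 V2, U ≠ [] := fun U hU =>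
    List.ne_nil_of_length_pos (by rw [length_of_mem_shuffles _ _ _ hU]; omega)
  set g : List I → WordPair I := fun U => if h : U ≠ [] then chi U V3 h h3 else pmax with hgdef
  have hg : ∀ (U : List I) (hU : U ≠ []), g U = chi U V3 hU h3 := fun U hU => dif_pos hU
  have hXg : ∀ U ∈ shuffles V1 V2,
      (fun U => Xchi C U V3) U = (fun U => MvPolynomial.X (g U)) U := by
    intro U hU
    simp only
    rw [hg U (hne U hU)]
    unfold Xchi
    rw [dif_pos ⟨hne U hU, h3⟩]
  set S : Multiset (WordPair I) := (shuffles V1 V2).map g with hS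
  set k := S.count pmax with hk
  have hk1 : 0 < k := Multiset.count_pos.mpr
    (Multiset.mem_map.mpr ⟨U0, hU0mem, by rw [hg U0 hU0ne, hpmaxeq]⟩)
  have hsplit : S = Multiset.filter (· = pmax) S + Multiset.filter (fun a => ¬ a = pmax) S :=
    (Multiset.filter_add_not _ S).symm
  have hfe : Multiset.filter (· = pmax) S = Multiset.replicate k pmax :=
    Multiset.filter_eq' S pmax
  have hshR : shSumR C V1 V2 V3 =
      (k : C) • MvPolynomial.X pmax
        + ((Multiset.filter (fun a => ¬ a = pmax) S).map MvPolynomial.X).sum := by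
    show ((shuffles V1 V2).map fun U => Xchi C U V3).sum = _
    rw [Multiset.map_congr rfl hXg]
    have hmm : ((shuffles V1 V2).map fun U => MvPolynomial.X (g U))
        = S.map (MvPolynomial.X (R := C)) := by
      rw [hS, Multiset.map_map]; rfl
    rw [hmm]
    conv_lhs => rw [hsplit]
    rw [Multiset.map_add, Multiset.sum_add, hfe, Multiset.map_replicate,
      Multiset.sum_replicate, Nat.cast_smul_eq_nsmul]
  have goodrest : Good pmax
      (((Multiset.filter (fun a => ¬ a = pmax) S).map MvPolynomial.X).sum
        : MvPolynomial (WordPair I) C) := by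
    apply good_multiset_sum
    intro f hf
    rcases Multiset.mem_map.mp hf with ⟨p, hpmem, rfl⟩
    have hp2 := Multiset.mem_filter.mp hpmem
    rcases Multiset.mem_map.mp hp2.1 with ⟨U, hU, rfl⟩
    have hUne := hne U hU
    have hp3 := hp2.2
    rw [hg U hUne] at hp3 ⊢
    rcases hmax U hU hUne with h | h
    · exact good_X h
    · exact absurd h hp3
  have goodL : Good pmax (shSumL C V1 V2 V3) := by
    apply good_multiset_sum
    intro f hf
    rcases Multiset.mem_map.mp hf with ⟨U, hU, rfl⟩
    have hUlen := length_of_mem_shuffles V2 V3 U hU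
    have hUne : U ≠ [] := List.ne_nil_of_length_pos (by omega)
    have hle : DlexLe V1 U := Or.inl (Or.inl (by omega))
    unfold Xchi
    rw [dif_pos ⟨h1, hUne⟩]
    apply good_X
    rw [chi_eq_of_le V1 U h1 hUne hle]
    exact Or.inr ⟨show V1.length + U.length = _ by omega, Or.inl hfst⟩
  set B : MvPolynomial (WordPair I) C := ∑ j ∈ Finset.range V2.length,
      ((∑ i ∈ Finset.Ico (1 - j) V1.length,
          Xchi C (V1.drop i) (V2.drop j) * shSumR C (V1.take i) (V2.take j) V3)
        - ∑ k ∈ Finset.Ico (1 - j) V3.length,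
          shSumL C V1 (V2.take j) (V3.take k) * Xchi C (V2.drop j) (V3.drop k)) with hB
  have goodB : Good pmax B := by
    apply good_finset_sum
    intro j hj
    rw [Finset.mem_range] at hj
    apply good_sub
    · apply good_finset_sum
      intro i hi
      rw [Finset.mem_Ico] at hi
      apply good_mul
      · apply good_Xchi_small
        simp only [List.length_drop]
        omega
      · apply good_shSumR_small
        simp only [List.length_take]
        omega
    · apply good_finset_sum
      intro kk hkk
      rw [Finset.mem_Ico] at hkk
      apply good_mul
      · apply good_shSumL_small
        simp only [List.length_take]
        omega
      · apply good_Xchi_small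
        simp only [List.length_drop]
        omega
  have hr : rPoly C V1 V2 V3 = shSumR C V1 V2 V3 - shSumL C V1 V2 V3 + B := rfl
  refine ⟨k, hk1, rPoly C V1 V2 V3 - (k : C) • MvPolynomial.X pmax, by abel, ?_⟩
  have heq : rPoly C V1 V2 V3 - (k : C) • MvPolynomial.X pmax
      = (((Multiset.filter (fun a => ¬ a = pmax) S).map MvPolynomial.X).sum
          - shSumL C V1 V2 V3) + B := by
    rw [hr, hshR]; ring
  rw [heq]
  exact good_add (good_sub goodrest goodL) goodB
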